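/- arXiv:1311.4663 — 3 statements merged into one kernel-verified Lean document; each statement's English description precedes it below -/
import Mathlib

section
/- With s = 1: m(d_{1,0}) − m(d_{0,1}) = 11576781275735. -/
/-- Binomial coefficient `C(m, N)` for an integer `m`, with the convention
`C(m, N) = 0` whenever `m < N`. -/
def intChoose (m : ℤ) (N : ℕ) : ℤ :=
  if m < (N : ℤ) then 0 else (m.toNat.choose N : ℤ)

/-- The dimension `m(e)` of the component of the moduli space corresponding to a
complete intersection of multidegree `e = (e_1, …, e_r)` in `ℂP^N`, `N = r + 5`:
`m(e) = 1 - (N+1)^2 + Σ_i C(N+e_i, N)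
      + Σ_i Σ_{j=1}^r (-1)^j Σ_{1 ≤ k_1 < ⋯ < k_j ≤ r} C(N+e_i-e_{k_1}-⋯-e_{k_j}, N)`. -/
def mdim (e : List ℕ) : ℤ :=
  let r := e.length
  let N := r + 5
  1 - ((N : ℤ) + 1) ^ 2
    + ∑ i ∈ Finset.range r, intChoose ((N : ℤ) + (e.getD i 0 : ℤ)) N
    + ∑ i ∈ Finset.range r, ∑ j ∈ Finset.Icc 1 r, (-1 : ℤ) ^ j *
        ∑ S ∈ (Finset.range r).powersetCard j,
          intChoose ((N : ℤ) + (e.getD i 0 : ℤ) - ∑ k ∈ S, (e.getD k 0 : ℤ)) N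

def dA : List ℕ := [88, 77, 72, 54, 48, 31, 29]
def dB : List ℕ := [87, 81, 64, 62, 44, 33, 28]

/-- The composed multidegree `d_{λ,μ}`: `λ` copies of `d` followed by `μ` copies of `d′`. -/
def dcomp (lam mu : ℕ) : List ℕ :=
  (List.replicate lam dA).flatten ++ (List.replicate mu dB).flatten

theorem stmt12 : mdim (dcomp 1 0) - mdim (dcomp 0 1) = 11576781275735 := by
  decide
end

section
/- Let s ≥ 1, 0 ≤ λ ≤ s, N = 7s + 5, and write the entries of d_{λ,s−λ} as d_1, …, d_{7s}. Then Σ over all triples 1 ≤ k_1 < k_2 < k_3 ≤ 7s of C(N + 88 − d_{k_1} − d_{k_2} − d_{k_3}, N) equals λ^2(s−λ) + [λ·C(s−λ,2) + (1/6)(λ−2)(λ−1)λ]·C(N+1, N) + (λ(λ−1)(s−λ)/2)·C(N+2, N) + λ·C(s−λ,2)·C(N+3, N) + (1/6)(s−λ−2)(s−λ−1)(s−λ)·C(N+4, N). -/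
namespace Stmt17
open Finset

def cc (N : ℕ) (x : ℤ) : ℤ := intChoose ((N:ℤ) + 88 - x) N

lemma cc_zero (N : ℕ) (x : ℤ) (hx : 89 ≤ x) : cc N x = 0 := by
  unfold cc intChoose
  rw [if_pos (by omega)]

lemma cc_88 (N : ℕ) : cc N 88 = 1 := by
  unfold cc intChoose
  rw [if_neg (by omega), show ((N:ℤ) + 88 - 88).toNat = N by omega, Nat.choose_self]
  norm_num

lemma cc_84 (N : ℕ) : cc N 84 = intChoose ((N:ℤ)+4) N := by unfold cc; congr 1; ring
lemma cc_85 (N : ℕ) : cc N 85 = intChoose ((N:ℤ)+3) N := by unfold cc; congr 1; ring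
lemma cc_86 (N : ℕ) : cc N 86 = intChoose ((N:ℤ)+2) N := by unfold cc; congr 1; ring
lemma cc_87 (N : ℕ) : cc N 87 = intChoose ((N:ℤ)+1) N := by unfold cc; congr 1; ring

def S1 (N : ℕ) (e : ℕ → ℤ) (n : ℕ) (t : ℤ) : ℤ := ∑ i ∈ range n, cc N (t + e i)
def S2 (N : ℕ) (e : ℕ → ℤ) (n : ℕ) (t : ℤ) : ℤ :=
  ∑ S ∈ (range n).powersetCard 2, cc N (t + ∑ k ∈ S, e k)
def S3 (N : ℕ) (e : ℕ → ℤ) (n : ℕ) : ℤ :=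
  ∑ S ∈ (range n).powersetCard 3, cc N (∑ k ∈ S, e k)

lemma sum_powersetCard_range_succ (f : Finset ℕ → ℤ) (n r : ℕ) :
    ∑ S ∈ (range (n+1)).powersetCard (r+1), f S
      = (∑ S ∈ (range n).powersetCard (r+1), f S)
        + ∑ S ∈ (range n).powersetCard r, f (insert n S) := by
  rw [Finset.range_add_one, powersetCard_succ_insert (by simp), sum_union, sum_image]
  · intro S hS T hT h
    have hS' : n ∉ S := fun hn => by simpa using (mem_powersetCard.1 hS).1 hn
    have hT' : n ∉ T := fun hn => by simpa using (mem_powersetCard.1 hT).1 hn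
    rw [← Finset.erase_insert hS', ← Finset.erase_insert hT', h]
  · rw [Finset.disjoint_left]
    intro S hS hS'
    have h1 : n ∉ S := fun hn => by simpa using (mem_powersetCard.1 hS).1 hn
    obtain ⟨T, hT, rfl⟩ := Finset.mem_image.1 hS'
    exact h1 (Finset.mem_insert_self _ _)

lemma S1_succ (N e n t) : S1 N e (n+1) t = S1 N e n t + cc N (t + e n) :=
  Finset.sum_range_succ _ _

lemma S2_succ (N e n t) : S2 N e (n+1) t = S2 N e n t + S1 N e n (t + e n) := by
  unfold S2 S1
  rw [sum_powersetCard_range_succ]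
  congr 1
  rw [powersetCard_one, sum_map]
  apply sum_congr rfl
  intro i hi
  have : (n : ℕ) ∉ ({i} : Finset ℕ) := by
    simp only [Finset.mem_singleton]
    intro h; subst h; simp at hi
  simp only [Function.Embedding.coeFn_mk] at this ⊢
  rw [Finset.sum_insert this, Finset.sum_singleton]
  ring_nf

lemma S3_succ (N e n) : S3 N e (n+1) = S3 N e n + S2 N e n (e n) := by
  unfold S3 S2
  rw [sum_powersetCard_range_succ]
  congr 1
  apply sum_congr rfl
  intro S hS
  have hn : n ∉ S := fun hn => by
    simpa using (mem_powersetCard.1 hS).1 hn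
  rw [Finset.sum_insert hn]


lemma S1_add (N e n t) : ∀ m, S1 N e (n+m) t
    = S1 N e n t + ∑ j ∈ range m, cc N (t + e (n+j)) := by
  intro m
  induction m with
  | zero => simp
  | succ m ih =>
    rw [show n + (m+1) = (n+m)+1 by ring, S1_succ, ih, Finset.sum_range_succ]
    ring

lemma S2_add (N e n t) : ∀ m, S2 N e (n+m) t
    = S2 N e n t + (∑ j ∈ range m, S1 N e n (t + e (n+j)))
      + ∑ j ∈ range m, ∑ k ∈ range j, cc N (t + e (n+j) + e (n+k)) := by
  intro m
  induction m with
  | zero => simp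
  | succ m ih =>
    rw [show n + (m+1) = (n+m)+1 by ring, S2_succ, ih, S1_add,
      Finset.sum_range_succ _ m, Finset.sum_range_succ _ m]
    ring

lemma S3_add (N e n) : ∀ m, S3 N e (n+m)
    = S3 N e n + (∑ j ∈ range m, S2 N e n (e (n+j)))
      + (∑ j ∈ range m, ∑ k ∈ range j, S1 N e n (e (n+j) + e (n+k)))
      + ∑ j ∈ range m, ∑ k ∈ range j, ∑ l ∈ range k,
          cc N (e (n+j) + e (n+k) + e (n+l)) := by
  intro m
  induction m with
  | zero => simp
  | succ m ih =>
    rw [show n + (m+1) = (n+m)+1 by ring, S3_succ, ih, S2_add,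
      Finset.sum_range_succ _ m, Finset.sum_range_succ _ m, Finset.sum_range_succ _ m]
    ring


lemma S1_congr {e e' : ℕ → ℤ} {n : ℕ} (h : ∀ i < n, e i = e' i) (N t) :
    S1 N e n t = S1 N e' n t := by
  unfold S1
  exact Finset.sum_congr rfl fun i hi => by rw [h i (Finset.mem_range.1 hi)]

lemma S2_congr {e e' : ℕ → ℤ} {n : ℕ} (h : ∀ i < n, e i = e' i) (N t) :
    S2 N e n t = S2 N e' n t := by
  unfold S2
  refine Finset.sum_congr rfl fun S hS => ?_
  have hsub := (mem_powersetCard.1 hS).1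
  congr 1
  refine congrArg _ (Finset.sum_congr rfl fun k hk => ?_)
  exact h k (Finset.mem_range.1 (hsub hk))

lemma S3_congr {e e' : ℕ → ℤ} {n : ℕ} (h : ∀ i < n, e i = e' i) (N) :
    S3 N e n = S3 N e' n := by
  unfold S3
  refine Finset.sum_congr rfl fun S hS => ?_
  have hsub := (mem_powersetCard.1 hS).1
  exact congrArg _ (Finset.sum_congr rfl fun k hk => h k (Finset.mem_range.1 (hsub hk)))

def E (lam mu : ℕ) (k : ℕ) : ℤ := ((dcomp lam mu).getD k 0 : ℤ)

lemma length_dcomp (l m : ℕ) : (dcomp l m).length = 7*(l+m) := by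
  simp [dcomp, List.length_flatten, List.map_replicate, List.sum_replicate, dA, dB]
  ring

lemma dcomp_succ_right (l m : ℕ) : dcomp l (m+1) = dcomp l m ++ dB := by
  unfold dcomp
  rw [List.replicate_succ' (n := m), List.flatten_append, List.append_assoc]
  simp

lemma dcomp_succ_left (l : ℕ) : dcomp (l+1) 0 = dcomp l 0 ++ dA := by
  unfold dcomp
  rw [List.replicate_succ' (n := l), List.flatten_append]
  simp

lemma E_lt_right (l m : ℕ) : ∀ k < 7*(l+m), E l (m+1) k = E l m k := by
  intro k hk
  unfold E
  rw [dcomp_succ_right]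
  congr 1
  rw [List.getD_eq_getElem?_getD, List.getD_eq_getElem?_getD,
    List.getElem?_append_left (by rw [length_dcomp]; omega)]

lemma E_lt_left (l : ℕ) : ∀ k < 7*(l+0), E (l+1) 0 k = E l 0 k := by
  intro k hk
  unfold E
  rw [dcomp_succ_left]
  congr 1
  rw [List.getD_eq_getElem?_getD, List.getD_eq_getElem?_getD,
    List.getElem?_append_left (by rw [length_dcomp]; omega)]

lemma E_block_right (l m : ℕ) (j : ℕ) (hj : j < 7) :
    E l (m+1) (7*(l+m)+j) = ((dB.getD j 0 : ℕ) : ℤ) := by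
  unfold E
  rw [dcomp_succ_right]
  congr 1
  rw [List.getD_eq_getElem?_getD, List.getD_eq_getElem?_getD,
    List.getElem?_append_right (by rw [length_dcomp]; omega), length_dcomp,
    show 7*(l+m)+j - 7*(l+m) = j by omega]

lemma E_block_left (l : ℕ) (j : ℕ) (hj : j < 7) :
    E (l+1) 0 (7*(l+0)+j) = ((dA.getD j 0 : ℕ) : ℤ) := by
  unfold E
  rw [dcomp_succ_left]
  congr 1
  rw [List.getD_eq_getElem?_getD, List.getD_eq_getElem?_getD,
    List.getElem?_append_right (by rw [length_dcomp]; omega), length_dcomp,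
    show 7*(l+0)+j - 7*(l+0) = j by omega]


lemma F1 (N lam mu : ℕ) : ∀ t : ℤ, 45 ≤ t →
    S1 N (E lam mu) (7*(lam+mu)) t
      = (mu:ℤ) * cc N (t+28) + (lam:ℤ) * cc N (t+29)
        + (lam:ℤ) * cc N (t+31) + (mu:ℤ) * cc N (t+33) := by
  induction mu with
  | zero =>
    induction lam with
    | zero =>
      intro t ht; simp [S1]
    | succ l ih =>
      intro t ht
      have hb : ∑ j ∈ range 7, cc N (t + E (l+1) 0 (7*(l+0)+j))
          = ∑ j ∈ range 7, cc N (t + ((dA.getD j 0 : ℕ) : ℤ)) :=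
        Finset.sum_congr rfl (fun j hj => by
          rw [E_block_left l j (Finset.mem_range.1 hj)])
      rw [show 7*(l+1+0) = 7*(l+0)+7 by ring, S1_add, S1_congr (E_lt_left l) N t, ih t ht, hb]
      simp only [Finset.sum_range_succ, Finset.sum_range_zero, dA, List.getD_cons_zero, List.getD_cons_succ]
      push_cast
      rw [cc_zero N (t+88) (by omega), cc_zero N (t+77) (by omega),
        cc_zero N (t+72) (by omega), cc_zero N (t+54) (by omega),
        cc_zero N (t+48) (by omega)]
      push_cast
      ring
  | succ m ih =>
    intro t ht
    have hb : ∑ j ∈ range 7, cc N (t + E lam (m+1) (7*(lam+m)+j))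
        = ∑ j ∈ range 7, cc N (t + ((dB.getD j 0 : ℕ) : ℤ)) :=
      Finset.sum_congr rfl (fun j hj => by
        rw [E_block_right lam m j (Finset.mem_range.1 hj)])
    rw [show 7*(lam+(m+1)) = 7*(lam+m)+7 by ring, S1_add,
      S1_congr (E_lt_right lam m) N t, ih t ht, hb]
    simp only [Finset.sum_range_succ, Finset.sum_range_zero, dB, List.getD_cons_zero, List.getD_cons_succ]
    push_cast
    rw [cc_zero N (t+87) (by omega), cc_zero N (t+81) (by omega),
      cc_zero N (t+64) (by omega), cc_zero N (t+62) (by omega),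
      cc_zero N (t+44) (by omega)]
    push_cast
    ring


lemma F2 (N lam mu : ℕ) : ∀ t : ℤ, 28 ≤ t →
    S2 N (E lam mu) (7*(lam+mu)) t
      = (mu.choose 2 : ℤ) * cc N (t+56) + (lam:ℤ)*(mu:ℤ) * cc N (t+57)
        + (lam.choose 2 : ℤ) * cc N (t+58) + (lam:ℤ)*(mu:ℤ) * cc N (t+59)
        + (lam:ℤ)^2 * cc N (t+60) := by
  induction mu with
  | zero =>
    induction lam with
    | zero =>
      intro t ht
      simp only [S2, show (7:ℕ)*(0+0) = 0 by norm_num,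
        show ((range 0).powersetCard 2) = ∅ from Finset.powersetCard_eq_empty.2 (by simp)]
      simp
    | succ l ih =>
      intro t ht
      have hb1 : (∑ j ∈ range 7, S1 N (E (l+1) 0) (7*(l+0)) (t + E (l+1) 0 (7*(l+0)+j)))
          = ∑ j ∈ range 7, S1 N (E l 0) (7*(l+0)) (t + ((dA.getD j 0 : ℕ):ℤ)) :=
        Finset.sum_congr rfl (fun j hj => by
          rw [E_block_left l j (Finset.mem_range.1 hj), S1_congr (E_lt_left l) N _])
      have hb2 : (∑ j ∈ range 7, ∑ k ∈ range j, cc N (t + E (l+1) 0 (7*(l+0)+j) + E (l+1) 0 (7*(l+0)+k)))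
          = ∑ j ∈ range 7, ∑ k ∈ range j, cc N (t + ((dA.getD j 0:ℕ):ℤ) + ((dA.getD k 0:ℕ):ℤ)) :=
        Finset.sum_congr rfl (fun j hj => Finset.sum_congr rfl (fun k hk => by
          rw [E_block_left l j (Finset.mem_range.1 hj),
            E_block_left l k (by have h1 := Finset.mem_range.1 hj; have h2 := Finset.mem_range.1 hk; omega)]))
      rw [show 7*(l+1+0) = 7*(l+0)+7 by ring, S2_add, S2_congr (E_lt_left l) N t, ih t ht, hb1, hb2]
      simp only [Finset.sum_range_succ, Finset.sum_range_zero, dA, List.getD_cons_zero, List.getD_cons_succ]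
      push_cast
      rw [F1 N l 0 (t+88) (by omega), F1 N l 0 (t+77) (by omega), F1 N l 0 (t+72) (by omega),
        F1 N l 0 (t+54) (by omega), F1 N l 0 (t+48) (by omega), F1 N l 0 (t+31) (by omega),
        F1 N l 0 (t+29) (by omega)]
      ring_nf
      rw [cc_zero N (62+t) (by omega), cc_zero N (77+t) (by omega), cc_zero N (79+t) (by omega), cc_zero N (83+t) (by omega), cc_zero N (85+t) (by omega), cc_zero N (101+t) (by omega), cc_zero N (102+t) (by omega), cc_zero N (103+t) (by omega), cc_zero N (106+t) (by omega), cc_zero N (108+t) (by omega), cc_zero N (117+t) (by omega), cc_zero N (119+t) (by omega), cc_zero N (120+t) (by omega), cc_zero N (125+t) (by omega), cc_zero N (126+t) (by omega), cc_zero N (131+t) (by omega), cc_zero N (136+t) (by omega), cc_zero N (142+t) (by omega), cc_zero N (149+t) (by omega), cc_zero N (160+t) (by omega), cc_zero N (165+t) (by omega)]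
      rw [show (1+l).choose 2 = l.choose 2 + l by
        rw [show 1+l = l+1 by ring, Nat.choose_succ_succ, Nat.choose_one_right, Nat.add_comm]]
      push_cast
      ring
  | succ m ih =>
    intro t ht
    have hb1 : (∑ j ∈ range 7, S1 N (E lam (m+1)) (7*(lam+m)) (t + E lam (m+1) (7*(lam+m)+j)))
        = ∑ j ∈ range 7, S1 N (E lam m) (7*(lam+m)) (t + ((dB.getD j 0 : ℕ):ℤ)) :=
      Finset.sum_congr rfl (fun j hj => by
        rw [E_block_right lam m j (Finset.mem_range.1 hj), S1_congr (E_lt_right lam m) N _])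
    have hb2 : (∑ j ∈ range 7, ∑ k ∈ range j, cc N (t + E lam (m+1) (7*(lam+m)+j) + E lam (m+1) (7*(lam+m)+k)))
        = ∑ j ∈ range 7, ∑ k ∈ range j, cc N (t + ((dB.getD j 0:ℕ):ℤ) + ((dB.getD k 0:ℕ):ℤ)) :=
      Finset.sum_congr rfl (fun j hj => Finset.sum_congr rfl (fun k hk => by
        rw [E_block_right lam m j (Finset.mem_range.1 hj),
          E_block_right lam m k (by have h1 := Finset.mem_range.1 hj; have h2 := Finset.mem_range.1 hk; omega)]))
    rw [show 7*(lam+(m+1)) = 7*(lam+m)+7 by ring, S2_add, S2_congr (E_lt_right lam m) N t, ih t ht, hb1, hb2]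
    simp only [Finset.sum_range_succ, Finset.sum_range_zero, dB, List.getD_cons_zero, List.getD_cons_succ]
    push_cast
    rw [F1 N lam m (t+87) (by omega), F1 N lam m (t+81) (by omega), F1 N lam m (t+64) (by omega),
      F1 N lam m (t+62) (by omega), F1 N lam m (t+44) (by omega), F1 N lam m (t+33) (by omega),
      F1 N lam m (t+28) (by omega)]
    ring_nf
    rw [cc_zero N (61+t) (by omega), cc_zero N (62+t) (by omega), cc_zero N (64+t) (by omega), cc_zero N (66+t) (by omega), cc_zero N (72+t) (by omega), cc_zero N (73+t) (by omega), cc_zero N (75+t) (by omega), cc_zero N (77+t) (by omega), cc_zero N (90+t) (by omega), cc_zero N (91+t) (by omega), cc_zero N (92+t) (by omega), cc_zero N (93+t) (by omega), cc_zero N (95+t) (by omega), cc_zero N (97+t) (by omega), cc_zero N (106+t) (by omega), cc_zero N (108+t) (by omega), cc_zero N (109+t) (by omega), cc_zero N (110+t) (by omega), cc_zero N (112+t) (by omega), cc_zero N (114+t) (by omega), cc_zero N (115+t) (by omega), cc_zero N (116+t) (by omega), cc_zero N (118+t) (by omega), cc_zero N (120+t) (by omega), cc_zero N (125+t) (by omega),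 cc_zero N (126+t) (by omega), cc_zero N (131+t) (by omega), cc_zero N (143+t) (by omega), cc_zero N (145+t) (by omega), cc_zero N (149+t) (by omega), cc_zero N (151+t) (by omega), cc_zero N (168+t) (by omega)]
    rw [show (1+m).choose 2 = m.choose 2 + m by
      rw [show 1+m = m+1 by ring, Nat.choose_succ_succ, Nat.choose_one_right, Nat.add_comm]]
    push_cast
    ring


set_option maxHeartbeats 2000000 in
set_option pp.deepTerms true in
lemma F3 (N lam mu : ℕ) :
    S3 N (E lam mu) (7*(lam+mu))
      = (lam:ℤ)^2*(mu:ℤ)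
        + ((lam:ℤ)*(mu.choose 2:ℤ) + (lam.choose 3:ℤ)) * intChoose ((N:ℤ)+1) N
        + (lam.choose 2:ℤ)*(mu:ℤ) * intChoose ((N:ℤ)+2) N
        + (lam:ℤ)*(mu.choose 2:ℤ) * intChoose ((N:ℤ)+3) N
        + (mu.choose 3:ℤ) * intChoose ((N:ℤ)+4) N := by
  induction mu with
  | zero =>
    induction lam with
    | zero =>
      simp only [S3, show (7:ℕ)*(0+0) = 0 by norm_num,
        show ((range 0).powersetCard 3) = ∅ from Finset.powersetCard_eq_empty.2 (by simp)]
      simp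
    | succ l ih =>
      have hb1 : (∑ j ∈ range 7, S2 N (E (l+1) 0) (7*(l+0)) (E (l+1) 0 (7*(l+0)+j)))
          = ∑ j ∈ range 7, S2 N (E l 0) (7*(l+0)) ((dA.getD j 0 : ℕ):ℤ) :=
        Finset.sum_congr rfl (fun j hj => by
          rw [E_block_left l j (Finset.mem_range.1 hj), S2_congr (E_lt_left l) N _])
      have hb2 : (∑ j ∈ range 7, ∑ k ∈ range j, S1 N (E (l+1) 0) (7*(l+0)) (E (l+1) 0 (7*(l+0)+j) + E (l+1) 0 (7*(l+0)+k)))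
          = ∑ j ∈ range 7, ∑ k ∈ range j, S1 N (E l 0) (7*(l+0)) (((dA.getD j 0:ℕ):ℤ) + ((dA.getD k 0:ℕ):ℤ)) :=
        Finset.sum_congr rfl (fun j hj => Finset.sum_congr rfl (fun k hk => by
          rw [E_block_left l j (Finset.mem_range.1 hj),
            E_block_left l k (by have h1 := Finset.mem_range.1 hj; have h2 := Finset.mem_range.1 hk; omega),
            S1_congr (E_lt_left l) N _]))
      have hb3 : (∑ j ∈ range 7, ∑ k ∈ range j, ∑ i ∈ range k, cc N (E (l+1) 0 (7*(l+0)+j) + E (l+1) 0 (7*(l+0)+k) + E (l+1) 0 (7*(l+0)+i)))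
          = ∑ j ∈ range 7, ∑ k ∈ range j, ∑ i ∈ range k, cc N (((dA.getD j 0:ℕ):ℤ) + ((dA.getD k 0:ℕ):ℤ) + ((dA.getD i 0:ℕ):ℤ)) :=
        Finset.sum_congr rfl (fun j hj => Finset.sum_congr rfl (fun k hk => Finset.sum_congr rfl (fun i hi => by
          have h1 := Finset.mem_range.1 hj
          have h2 := Finset.mem_range.1 hk
          have h3 := Finset.mem_range.1 hi
          rw [E_block_left l j h1, E_block_left l k (by omega), E_block_left l i (by omega)])))
      rw [show 7*(l+1+0) = 7*(l+0)+7 by ring, S3_add, S3_congr (E_lt_left l) N, ih, hb1, hb2, hb3]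
      simp only [Finset.sum_range_succ, Finset.sum_range_zero, dA, List.getD_cons_zero, List.getD_cons_succ]
      push_cast
      rw [F2 N l 0 88 (by omega), F2 N l 0 77 (by omega), F2 N l 0 72 (by omega),
        F2 N l 0 54 (by omega), F2 N l 0 48 (by omega), F2 N l 0 31 (by omega),
        F2 N l 0 29 (by omega)]
      rw [F1 N l 0 165 (by omega), F1 N l 0 160 (by omega), F1 N l 0 142 (by omega),
        F1 N l 0 136 (by omega), F1 N l 0 119 (by omega), F1 N l 0 117 (by omega),
        F1 N l 0 149 (by omega), F1 N l 0 131 (by omega), F1 N l 0 125 (by omega),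
        F1 N l 0 108 (by omega), F1 N l 0 106 (by omega), F1 N l 0 126 (by omega),
        F1 N l 0 120 (by omega), F1 N l 0 103 (by omega), F1 N l 0 101 (by omega),
        F1 N l 0 102 (by omega), F1 N l 0 85 (by omega), F1 N l 0 83 (by omega),
        F1 N l 0 79 (by omega), F1 N l 0 77 (by omega), F1 N l 0 60 (by omega)]
      ring_nf
      rw [cc_zero N 89 (by omega), cc_zero N 104 (by omega), cc_zero N 106 (by omega), cc_zero N 108 (by omega), cc_zero N 110 (by omega), cc_zero N 112 (by omega), cc_zero N 114 (by omega), cc_zero N 130 (by omega), cc_zero N 131 (by omega), cc_zero N 132 (by omega), cc_zero N 133 (by omega), cc_zero N 135 (by omega), cc_zero N 137 (by omega), cc_zero N 146 (by omega), cc_zero N 148 (by omega), cc_zero N 149 (by omega), cc_zero N 151 (by omega), cc_zero N 154 (by omega), cc_zero N 155 (by omega), cc_zero N 156 (by omega), cc_zero N 157 (by omega), cc_zero N 160 (by omega), cc_zero N 162 (by omega), cc_zero N 165 (by omega), cc_zero N 167 (by omega), cc_zero N 171 (by omega), cc_zero N 173 (by omega), cc_zero N 174 (by omega), cc_zero N 178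 (by omega), cc_zero N 179 (by omega), cc_zero N 180 (by omega), cc_zero N 189 (by omega), cc_zero N 190 (by omega), cc_zero N 191 (by omega), cc_zero N 194 (by omega), cc_zero N 196 (by omega), cc_zero N 197 (by omega), cc_zero N 203 (by omega), cc_zero N 208 (by omega), cc_zero N 213 (by omega), cc_zero N 214 (by omega), cc_zero N 219 (by omega), cc_zero N 237 (by omega)]
      rw [cc_zero N 134 (by omega), cc_zero N 91 (by omega), cc_zero N 150 (by omega),
        cc_zero N 139 (by omega), cc_zero N 116 (by omega), cc_zero N 144 (by omega),
        cc_zero N 128 (by omega)]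
      rw [cc_87, cc_85, show (1+l).choose 3 = l.choose 3 + l.choose 2 by
        rw [show 1+l = l+1 by ring, Nat.choose_succ_succ, Nat.add_comm],
        show Nat.choose 0 2 = 0 from rfl, show Nat.choose 0 3 = 0 from rfl]
      push_cast
      ring
  | succ m ih =>
    have hb1 : (∑ j ∈ range 7, S2 N (E lam (m+1)) (7*(lam+m)) (E lam (m+1) (7*(lam+m)+j)))
        = ∑ j ∈ range 7, S2 N (E lam m) (7*(lam+m)) ((dB.getD j 0 : ℕ):ℤ) :=
      Finset.sum_congr rfl (fun j hj => by
        rw [E_block_right lam m j (Finset.mem_range.1 hj), S2_congr (E_lt_right lam m) N _])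
    have hb2 : (∑ j ∈ range 7, ∑ k ∈ range j, S1 N (E lam (m+1)) (7*(lam+m)) (E lam (m+1) (7*(lam+m)+j) + E lam (m+1) (7*(lam+m)+k)))
        = ∑ j ∈ range 7, ∑ k ∈ range j, S1 N (E lam m) (7*(lam+m)) (((dB.getD j 0:ℕ):ℤ) + ((dB.getD k 0:ℕ):ℤ)) :=
      Finset.sum_congr rfl (fun j hj => Finset.sum_congr rfl (fun k hk => by
        rw [E_block_right lam m j (Finset.mem_range.1 hj),
          E_block_right lam m k (by have h1 := Finset.mem_range.1 hj; have h2 := Finset.mem_range.1 hk; omega),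
          S1_congr (E_lt_right lam m) N _]))
    have hb3 : (∑ j ∈ range 7, ∑ k ∈ range j, ∑ i ∈ range k, cc N (E lam (m+1) (7*(lam+m)+j) + E lam (m+1) (7*(lam+m)+k) + E lam (m+1) (7*(lam+m)+i)))
        = ∑ j ∈ range 7, ∑ k ∈ range j, ∑ i ∈ range k, cc N (((dB.getD j 0:ℕ):ℤ) + ((dB.getD k 0:ℕ):ℤ) + ((dB.getD i 0:ℕ):ℤ)) :=
      Finset.sum_congr rfl (fun j hj => Finset.sum_congr rfl (fun k hk => Finset.sum_congr rfl (fun i hi => by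
        have h1 := Finset.mem_range.1 hj
        have h2 := Finset.mem_range.1 hk
        have h3 := Finset.mem_range.1 hi
        rw [E_block_right lam m j h1, E_block_right lam m k (by omega), E_block_right lam m i (by omega)])))
    rw [show 7*(lam+(m+1)) = 7*(lam+m)+7 by ring, S3_add, S3_congr (E_lt_right lam m) N, ih, hb1, hb2, hb3]
    simp only [Finset.sum_range_succ, Finset.sum_range_zero, dB, List.getD_cons_zero, List.getD_cons_succ]
    push_cast
    rw [F2 N lam m 87 (by omega), F2 N lam m 81 (by omega), F2 N lam m 64 (by omega),
      F2 N lam m 62 (by omega), F2 N lam m 44 (by omega), F2 N lam m 33 (by omega),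
      F2 N lam m 28 (by omega)]
    rw [F1 N lam m 168 (by omega),
      F1 N lam m 151 (by omega),
      F1 N lam m 149 (by omega),
      F1 N lam m 131 (by omega),
      F1 N lam m 120 (by omega),
      F1 N lam m 115 (by omega),
      F1 N lam m 145 (by omega),
      F1 N lam m 143 (by omega),
      F1 N lam m 125 (by omega),
      F1 N lam m 114 (by omega),
      F1 N lam m 109 (by omega),
      F1 N lam m 126 (by omega),
      F1 N lam m 108 (by omega),
      F1 N lam m 97 (by omega),
      F1 N lam m 92 (by omega),
      F1 N lam m 106 (by omega),
      F1 N lam m 95 (by omega),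
      F1 N lam m 90 (by omega),
      F1 N lam m 77 (by omega),
      F1 N lam m 72 (by omega),
      F1 N lam m 61 (by omega)]
    ring_nf
    rw [cc_zero N 89 (by omega),
      cc_zero N 90 (by omega),
      cc_zero N 91 (by omega),
      cc_zero N 92 (by omega),
      cc_zero N 93 (by omega),
      cc_zero N 94 (by omega),
      cc_zero N 100 (by omega),
      cc_zero N 101 (by omega),
      cc_zero N 102 (by omega),
      cc_zero N 103 (by omega),
      cc_zero N 104 (by omega),
      cc_zero N 105 (by omega),
      cc_zero N 106 (by omega),
      cc_zero N 108 (by omega),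
      cc_zero N 110 (by omega),
      cc_zero N 118 (by omega),
      cc_zero N 119 (by omega),
      cc_zero N 120 (by omega),
      cc_zero N 121 (by omega),
      cc_zero N 122 (by omega),
      cc_zero N 123 (by omega),
      cc_zero N 124 (by omega),
      cc_zero N 125 (by omega),
      cc_zero N 126 (by omega),
      cc_zero N 128 (by omega),
      cc_zero N 130 (by omega),
      cc_zero N 134 (by omega),
      cc_zero N 135 (by omega),
      cc_zero N 136 (by omega),
      cc_zero N 137 (by omega),
      cc_zero N 138 (by omega),
      cc_zero N 139 (by omega),
      cc_zero N 140 (by omega),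
      cc_zero N 141 (by omega),
      cc_zero N 142 (by omega),
      cc_zero N 143 (by omega),
      cc_zero N 144 (by omega),
      cc_zero N 145 (by omega),
      cc_zero N 146 (by omega),
      cc_zero N 147 (by omega),
      cc_zero N 148 (by omega),
      cc_zero N 149 (by omega),
      cc_zero N 151 (by omega),
      cc_zero N 153 (by omega),
      cc_zero N 154 (by omega),
      cc_zero N 155 (by omega),
      cc_zero N 156 (by omega),
      cc_zero N 157 (by omega),
      cc_zero N 158 (by omega),
      cc_zero N 159 (by omega),
      cc_zero N 160 (by omega),
      cc_zero N 162 (by omega),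
      cc_zero N 164 (by omega),
      cc_zero N 170 (by omega),
      cc_zero N 171 (by omega),
      cc_zero N 172 (by omega),
      cc_zero N 173 (by omega),
      cc_zero N 174 (by omega),
      cc_zero N 176 (by omega),
      cc_zero N 177 (by omega),
      cc_zero N 178 (by omega),
      cc_zero N 179 (by omega),
      cc_zero N 180 (by omega),
      cc_zero N 182 (by omega),
      cc_zero N 184 (by omega),
      cc_zero N 187 (by omega),
      cc_zero N 189 (by omega),
      cc_zero N 193 (by omega),
      cc_zero N 195 (by omega),
      cc_zero N 196 (by omega),
      cc_zero N 197 (by omega),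
      cc_zero N 199 (by omega),
      cc_zero N 201 (by omega),
      cc_zero N 207 (by omega),
      cc_zero N 212 (by omega),
      cc_zero N 213 (by omega),
      cc_zero N 230 (by omega),
      cc_zero N 232 (by omega)]
    rw [cc_84, cc_85, cc_86, cc_87, cc_88,
      show (1+m).choose 2 = m.choose 2 + m by
        rw [show 1+m = m+1 by ring, Nat.choose_succ_succ, Nat.choose_one_right, Nat.add_comm],
      show (1+m).choose 3 = m.choose 3 + m.choose 2 by
        rw [show 1+m = m+1 by ring, Nat.choose_succ_succ, Nat.add_comm]]
    push_cast
    ring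


lemma cast_choose_three (a : ℕ) : (a.choose 3 : ℚ) = a*(a-1)*(a-2)/6 := by
  induction a with
  | zero => simp
  | succ n ih =>
    rw [show (3:ℕ) = 2+1 from rfl, Nat.choose_succ_succ]
    push_cast
    rw [ih, Nat.cast_choose_two]
    ring

end Stmt17

theorem stmt17 (s lam : ℕ) (hs : 1 ≤ s) (hlam : lam ≤ s) :
    ((∑ S ∈ (Finset.range (7 * s)).powersetCard 3,
        intChoose (((7 * s + 5 : ℕ) : ℤ) + 88
          - ∑ k ∈ S, ((dcomp lam (s - lam)).getD k 0 : ℤ)) (7 * s + 5) : ℤ) : ℚ)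
      = (lam : ℚ) ^ 2 * ((s : ℚ) - lam)
        + ((lam : ℚ) * (((s : ℚ) - lam) * ((s : ℚ) - lam - 1) / 2)
            + (1 / 6) * ((lam : ℚ) - 2) * ((lam : ℚ) - 1) * (lam : ℚ))
          * (intChoose (((7 * s + 5 : ℕ) : ℤ) + 1) (7 * s + 5) : ℚ)
        + ((lam : ℚ) * ((lam : ℚ) - 1) * ((s : ℚ) - lam) / 2)
          * (intChoose (((7 * s + 5 : ℕ) : ℤ) + 2) (7 * s + 5) : ℚ)
        + (lam : ℚ) * (((s : ℚ) - lam) * ((s : ℚ) - lam - 1) / 2)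
          * (intChoose (((7 * s + 5 : ℕ) : ℤ) + 3) (7 * s + 5) : ℚ)
        + (1 / 6) * ((s : ℚ) - lam - 2) * ((s : ℚ) - lam - 1) * ((s : ℚ) - lam)
          * (intChoose (((7 * s + 5 : ℕ) : ℤ) + 4) (7 * s + 5) : ℚ) := by
  classical
  have hL : (∑ S ∈ (Finset.range (7 * s)).powersetCard 3,
        intChoose (((7 * s + 5 : ℕ) : ℤ) + 88
          - ∑ k ∈ S, ((dcomp lam (s - lam)).getD k 0 : ℤ)) (7 * s + 5) : ℤ)
      = Stmt17.S3 (7*s+5) (Stmt17.E lam (s-lam)) (7*(lam + (s-lam))) := by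
    rw [show 7*(lam + (s-lam)) = 7*s by omega]
    rfl
  rw [hL, Stmt17.F3]
  have hms : ((s - lam : ℕ) : ℚ) = (s:ℚ) - (lam:ℚ) := by
    exact Nat.cast_sub hlam
  rw [← hms]
  push_cast
  rw [Nat.cast_choose_two, Nat.cast_choose_two, Stmt17.cast_choose_three, Stmt17.cast_choose_three]
  ring
end

section
/- Let s ≥ 1, 0 ≤ λ ≤ s, N = 7s + 5, and write the entries of d_{λ,s−λ} as d_1, …, d_{7s}. Then Σ over all triples 1 ≤ k_1 < k_2 < k_3 ≤ 7s of C(N + 87 − d_{k_1} − d_{k_2} − d_{k_3}, N) equals λ·C(s−λ,2) + (1/6)(λ−2)(λ−1)λ + (λ(λ−1)(s−λ)/2)·C(N+1, N) + λ·C(s−λ,2)·C(N+2, N) + (1/6)(s−λ−2)(s−λ−1)(s−λ)·C(N+3, N). -/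
def ee (lam mu k : ℕ) : ℤ := ((dcomp lam mu).getD k 0 : ℕ)

def Ff (N : ℕ) (x : ℤ) : ℤ := intChoose ((N : ℤ) + 87 - x) N

lemma Ff_zero (N : ℕ) (x : ℤ) (hx : 88 ≤ x) : Ff N x = 0 := by
  rw [Ff, intChoose, if_pos (by omega)]

lemma Ff_87 (N : ℕ) : Ff N 87 = 1 := by
  rw [Ff, intChoose, if_neg (by omega)]
  norm_num [show ((N : ℤ) + 87 - 87).toNat = N by omega]

lemma Ff_86 (N : ℕ) : Ff N 86 = intChoose ((N : ℤ) + 1) N := by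
  rw [Ff]; congr 1; ring

lemma Ff_85 (N : ℕ) : Ff N 85 = intChoose ((N : ℤ) + 2) N := by
  rw [Ff]; congr 1; ring

lemma Ff_84 (N : ℕ) : Ff N 84 = intChoose ((N : ℤ) + 3) N := by
  rw [Ff]; congr 1; ring
lemma sum_pc_insert (n m : ℕ) (g : Finset ℕ → ℤ) :
    ∑ S ∈ (Finset.range (n+1)).powersetCard (m+1), g S
      = ∑ S ∈ (Finset.range n).powersetCard (m+1), g S
        + ∑ S ∈ (Finset.range n).powersetCard m, g (insert n S) := by
  rw [Finset.range_add_one, Finset.powersetCard_succ_insert (by simp)]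
  rw [Finset.sum_union]
  · rw [Finset.sum_image]
    intro S hS T hT hST
    have hnS : n ∉ S := fun h => by
      have := (Finset.mem_powersetCard.1 hS).1 h; simp at this
    have hnT : n ∉ T := fun h => by
      have := (Finset.mem_powersetCard.1 hT).1 h; simp at this
    have := congrArg (Finset.erase · n) hST
    simpa [Finset.erase_insert hnS, Finset.erase_insert hnT] using this
  · rw [Finset.disjoint_left]
    intro S hS hS'
    obtain ⟨T, hT, rfl⟩ := Finset.mem_image.1 hS'
    have h1 : n ∈ insert n T := Finset.mem_insert_self n T
    have := (Finset.mem_powersetCard.1 hS).1 h1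
    simp at this
lemma notMem_of_pc {n m : ℕ} {S : Finset ℕ} (hS : S ∈ (Finset.range n).powersetCard m) :
    n ∉ S := fun h => by
  have := (Finset.mem_powersetCard.1 hS).1 h; simp at this
lemma sym2 (e : ℕ → ℤ) (f : ℤ → ℤ) (n : ℕ) :
    2 * ∑ S ∈ (Finset.range n).powersetCard 2, f (∑ k ∈ S, e k)
      = (∑ i ∈ Finset.range n, ∑ j ∈ Finset.range n, f (e i + e j))
        - ∑ i ∈ Finset.range n, f (e i + e i) := by
  induction n with
  | zero =>
    rw [Finset.range_zero, Finset.powersetCard_eq_empty.2 (by simp)]; simp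
  | succ n ih =>
    rw [show (2:ℕ) = 1 + 1 from rfl, sum_pc_insert]
    have h1 : ∑ S ∈ (Finset.range n).powersetCard 1, f (∑ k ∈ insert n S, e k)
        = ∑ j ∈ Finset.range n, f (e n + e j) := by
      rw [Finset.powersetCard_one, Finset.sum_map]
      apply Finset.sum_congr rfl
      intro j hj
      have hj' : j < n := Finset.mem_range.1 hj
      rw [Finset.sum_insert (by simp [Function.Embedding.coeFn_mk]; omega)]
      simp
    rw [h1]
    simp only [Finset.sum_range_succ, Finset.sum_add_distrib]
    have hc : ∑ i ∈ Finset.range n, f (e i + e n) = ∑ i ∈ Finset.range n, f (e n + e i) :=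
      Finset.sum_congr rfl fun i _ => by rw [add_comm]
    rw [show (1:ℕ)+1 = 2 from rfl] at *
    linarith [ih]
lemma sym3 (e : ℕ → ℤ) (f : ℤ → ℤ) (n : ℕ) :
    6 * ∑ S ∈ (Finset.range n).powersetCard 3, f (∑ k ∈ S, e k)
      = (∑ i ∈ Finset.range n, ∑ j ∈ Finset.range n, ∑ k ∈ Finset.range n,
            f (e i + e j + e k))
        - 3 * (∑ i ∈ Finset.range n, ∑ j ∈ Finset.range n, f (e i + e i + e j))
        + 2 * ∑ i ∈ Finset.range n, f (e i + e i + e i) := by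
  induction n with
  | zero =>
    rw [Finset.range_zero, Finset.powersetCard_eq_empty.2 (by simp)]; simp
  | succ n ih =>
    rw [show (3:ℕ) = 2 + 1 from rfl, sum_pc_insert]
    have h1 : ∑ S ∈ (Finset.range n).powersetCard 2, f (∑ k ∈ insert n S, e k)
        = ∑ S ∈ (Finset.range n).powersetCard 2, f (e n + ∑ k ∈ S, e k) := by
      apply Finset.sum_congr rfl
      intro S hS
      rw [Finset.sum_insert (notMem_of_pc hS)]
    have h2 := sym2 e (fun x => f (e n + x)) n
    simp only [Finset.sum_range_succ, Finset.sum_add_distrib]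
    rw [show (2:ℕ)+1 = 3 from rfl] at *
    have c1 : ∑ i ∈ Finset.range n, ∑ j ∈ Finset.range n, f (e i + e j + e n)
        = ∑ i ∈ Finset.range n, ∑ j ∈ Finset.range n, f (e n + (e i + e j)) :=
      Finset.sum_congr rfl fun i _ => Finset.sum_congr rfl fun j _ => by ring_nf
    have c2 : ∑ i ∈ Finset.range n, ∑ j ∈ Finset.range n, f (e i + e n + e j)
        = ∑ i ∈ Finset.range n, ∑ j ∈ Finset.range n, f (e n + (e i + e j)) :=
      Finset.sum_congr rfl fun i _ => Finset.sum_congr rfl fun j _ => by ring_nf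
    have c3 : ∑ j ∈ Finset.range n, ∑ k ∈ Finset.range n, f (e n + e j + e k)
        = ∑ i ∈ Finset.range n, ∑ j ∈ Finset.range n, f (e n + (e i + e j)) :=
      Finset.sum_congr rfl fun i _ => Finset.sum_congr rfl fun j _ => by ring_nf
    have b1 : ∑ i ∈ Finset.range n, f (e i + e n + e n)
        = ∑ i ∈ Finset.range n, f (e n + e n + e i) :=
      Finset.sum_congr rfl fun i _ => by ring_nf
    have b2 : ∑ i ∈ Finset.range n, f (e n + e i + e n)
        = ∑ i ∈ Finset.range n, f (e n + e n + e i) :=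
      Finset.sum_congr rfl fun i _ => by ring_nf
    have b3 : ∑ i ∈ Finset.range n, f (e i + e i + e n)
        = ∑ i ∈ Finset.range n, f (e n + (e i + e i)) :=
      Finset.sum_congr rfl fun i _ => by ring_nf
    rw [h1]
    linarith [ih, h2]
lemma sum_range_getD (g : ℤ → ℤ) (L : List ℕ) :
    ∑ k ∈ Finset.range L.length, g ((L.getD k 0 : ℕ) : ℤ)
      = (L.map (fun a : ℕ => g (a : ℤ))).sum := by
  induction L with
  | nil => simp
  | cons a L ih =>
    rw [List.length_cons, Finset.sum_range_succ']
    simp only [List.getD_cons_succ, List.getD_cons_zero, ih]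
    simp [add_comm]

lemma map_sum_flatten_replicate (g : ℤ → ℤ) (m : ℕ) (L : List ℕ) :
    (((List.replicate m L).flatten).map (fun a : ℕ => g (a : ℤ))).sum
      = (m : ℤ) * ((L.map (fun a : ℕ => g (a : ℤ))).sum) := by
  induction m with
  | zero => simp
  | succ m ih =>
    rw [List.replicate_succ, List.flatten_cons, List.map_append, List.sum_append, ih]
    push_cast; ring

lemma dcomp_length (lam mu : ℕ) : (dcomp lam mu).length = 7 * lam + 7 * mu := by
  simp [dcomp, dA, dB, List.length_flatten, List.map_replicate, List.sum_replicate,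
    Nat.smul_one_eq_cast]
  ring
lemma sum_e (lam mu : ℕ) (g : ℤ → ℤ) :
    ∑ k ∈ Finset.range (7 * lam + 7 * mu), g (ee lam mu k)
      = (lam : ℤ) * (dA.map (fun a : ℕ => g (a : ℤ))).sum
        + (mu : ℤ) * (dB.map (fun a : ℕ => g (a : ℤ))).sum := by
  simp only [ee]
  rw [← dcomp_length lam mu, sum_range_getD]
  rw [dcomp, List.map_append, List.sum_append, map_sum_flatten_replicate,
    map_sum_flatten_replicate]
lemma e_ge (lam mu k : ℕ) (hk : k < 7 * lam + 7 * mu) :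
    28 ≤ ee lam mu k := by
  simp only [ee]
  rw [← dcomp_length lam mu] at hk
  rw [List.getD_eq_getElem _ _ hk]
  have hmem := List.getElem_mem hk
  have : ∀ a ∈ dcomp lam mu, 28 ≤ a := by
    intro a ha
    rw [dcomp, List.mem_append] at ha
    rcases ha with h | h <;>
    · rw [List.mem_flatten] at h
      obtain ⟨l, hl, hal⟩ := h
      rw [List.eq_of_mem_replicate hl] at hal
      fin_cases hal <;> norm_num
  exact_mod_cast this _ hmem
lemma keyA (N lam mu : ℕ) (y : ℤ) (hy : 55 ≤ y) :
    ∑ k ∈ Finset.range (7 * lam + 7 * mu), Ff N (ee lam mu k + y)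
      = (lam : ℤ) * Ff N (31 + y) + (lam : ℤ) * Ff N (29 + y)
        + (mu : ℤ) * Ff N (28 + y) := by
  rw [sum_e lam mu (fun t => Ff N (t + y))]
  simp only [dA, dB, List.map_cons, List.map_nil, List.sum_cons, List.sum_nil]
  push_cast
  rw [Ff_zero N (88 + y) (by linarith), Ff_zero N (77 + y) (by linarith),
    Ff_zero N (72 + y) (by linarith), Ff_zero N (54 + y) (by linarith),
    Ff_zero N (48 + y) (by linarith), Ff_zero N (87 + y) (by linarith),
    Ff_zero N (81 + y) (by linarith), Ff_zero N (64 + y) (by linarith),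
    Ff_zero N (62 + y) (by linarith), Ff_zero N (44 + y) (by linarith),
    Ff_zero N (33 + y) (by linarith)]
  ring

lemma keyAA (N lam mu : ℕ) (y : ℤ) (hy : 22 ≤ y) :
    ∑ k ∈ Finset.range (7 * lam + 7 * mu), Ff N (ee lam mu k + ee lam mu k + y)
      = (lam : ℤ) * Ff N (62 + y) + (lam : ℤ) * Ff N (58 + y)
        + (mu : ℤ) * Ff N (56 + y) := by
  rw [sum_e lam mu (fun t => Ff N (t + t + y))]
  simp only [dA, dB, List.map_cons, List.map_nil, List.sum_cons, List.sum_nil]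
  push_cast
  rw [Ff_zero N (176 + y) (by linarith), Ff_zero N (154 + y) (by linarith),
    Ff_zero N (144 + y) (by linarith), Ff_zero N (108 + y) (by linarith),
    Ff_zero N (96 + y) (by linarith), Ff_zero N (174 + y) (by linarith),
    Ff_zero N (162 + y) (by linarith), Ff_zero N (128 + y) (by linarith),
    Ff_zero N (124 + y) (by linarith), Ff_zero N (88 + y) (by linarith),
    Ff_zero N (66 + y) (by linarith)]
  ring

lemma keyAAA (N lam mu : ℕ) :
    ∑ k ∈ Finset.range (7 * lam + 7 * mu), Ff N (ee lam mu k + ee lam mu k + ee lam mu k)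
      = (lam : ℤ) * Ff N 87 + (mu : ℤ) * Ff N 84 := by
  rw [sum_e lam mu (fun t => Ff N (t + t + t))]
  simp only [dA, dB, List.map_cons, List.map_nil, List.sum_cons, List.sum_nil]
  push_cast
  rw [Ff_zero N 264 (by norm_num), Ff_zero N 231 (by norm_num),
    Ff_zero N 216 (by norm_num), Ff_zero N 162 (by norm_num),
    Ff_zero N 144 (by norm_num), Ff_zero N 93 (by norm_num),
    Ff_zero N 261 (by norm_num), Ff_zero N 243 (by norm_num),
    Ff_zero N 192 (by norm_num), Ff_zero N 186 (by norm_num),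
    Ff_zero N 132 (by norm_num), Ff_zero N 99 (by norm_num)]
  ring

lemma hT111 (N lam mu : ℕ) :
    ∑ i ∈ Finset.range (7*lam+7*mu), Ff N (ee lam mu i + ee lam mu i + ee lam mu i)
      = (lam : ℤ) * 1 + (mu : ℤ) * intChoose ((N : ℤ) + 3) N := by
  rw [keyAAA, Ff_87, Ff_84]

lemma hT21 (N lam mu : ℕ) :
    ∑ i ∈ Finset.range (7*lam+7*mu), ∑ j ∈ Finset.range (7*lam+7*mu),
        Ff N (ee lam mu i + ee lam mu i + ee lam mu j)
      = (lam : ℤ) * ((mu : ℤ) * 1 + (lam : ℤ) * 1 + (mu : ℤ) * intChoose ((N:ℤ)+2) N)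
        + (mu : ℤ) * ((lam : ℤ) * intChoose ((N:ℤ)+1) N + (mu : ℤ) * intChoose ((N:ℤ)+3) N) := by
  have step1 : ∀ i ∈ Finset.range (7*lam+7*mu),
      ∑ j ∈ Finset.range (7*lam+7*mu), Ff N (ee lam mu i + ee lam mu i + ee lam mu j)
        = (lam : ℤ) * Ff N (31 + (ee lam mu i + ee lam mu i))
          + (lam : ℤ) * Ff N (29 + (ee lam mu i + ee lam mu i))
          + (mu : ℤ) * Ff N (28 + (ee lam mu i + ee lam mu i)) := by
    intro i hi
    have h1 : ∀ j, ee lam mu i + ee lam mu i + ee lam mu j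
        = ee lam mu j + (ee lam mu i + ee lam mu i) := fun j => by ring
    simp only [h1]
    exact keyA N lam mu _ (by have := e_ge lam mu i (Finset.mem_range.1 hi); linarith)
  rw [Finset.sum_congr rfl step1]
  have c31 : ∀ i, (31:ℤ) + (ee lam mu i + ee lam mu i) = ee lam mu i + ee lam mu i + 31 :=
    fun i => by ring
  have c29 : ∀ i, (29:ℤ) + (ee lam mu i + ee lam mu i) = ee lam mu i + ee lam mu i + 29 :=
    fun i => by ring
  have c28 : ∀ i, (28:ℤ) + (ee lam mu i + ee lam mu i) = ee lam mu i + ee lam mu i + 28 :=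
    fun i => by ring
  simp only [c31, c29, c28]
  rw [Finset.sum_add_distrib, Finset.sum_add_distrib, ← Finset.mul_sum, ← Finset.mul_sum,
    ← Finset.mul_sum]
  rw [keyAA N lam mu 31 (by norm_num), keyAA N lam mu 29 (by norm_num),
    keyAA N lam mu 28 (by norm_num)]
  norm_num
  rw [Ff_zero N 93 (by norm_num), Ff_zero N 89 (by norm_num), Ff_zero N 91 (by norm_num),
    Ff_zero N 90 (by norm_num), Ff_87, Ff_86, Ff_85, Ff_84]
  ring
lemma hT3 (N lam mu : ℕ) :
    ∑ i ∈ Finset.range (7*lam+7*mu), ∑ j ∈ Finset.range (7*lam+7*mu),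
      ∑ k ∈ Finset.range (7*lam+7*mu),
        Ff N (ee lam mu i + ee lam mu j + ee lam mu k)
      = (lam:ℤ)^3 + 3*(lam:ℤ)*(mu:ℤ)^2
        + 3*(lam:ℤ)^2*(mu:ℤ)*intChoose ((N:ℤ)+1) N
        + 3*(lam:ℤ)*(mu:ℤ)^2*intChoose ((N:ℤ)+2) N
        + (mu:ℤ)^3*intChoose ((N:ℤ)+3) N := by
  have step12 : ∀ i ∈ Finset.range (7*lam+7*mu),
      ∑ j ∈ Finset.range (7*lam+7*mu), ∑ k ∈ Finset.range (7*lam+7*mu),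
          Ff N (ee lam mu i + ee lam mu j + ee lam mu k)
        = (lam:ℤ)*(lam:ℤ)*Ff N (ee lam mu i + 62)
          + 2*((lam:ℤ)*(lam:ℤ))*Ff N (ee lam mu i + 60)
          + (lam:ℤ)*(lam:ℤ)*Ff N (ee lam mu i + 58)
          + 2*((lam:ℤ)*(mu:ℤ))*Ff N (ee lam mu i + 59)
          + 2*((lam:ℤ)*(mu:ℤ))*Ff N (ee lam mu i + 57)
          + (mu:ℤ)*(mu:ℤ)*Ff N (ee lam mu i + 56) := by
    intro i hi
    have inner : ∀ j ∈ Finset.range (7*lam+7*mu),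
        ∑ k ∈ Finset.range (7*lam+7*mu), Ff N (ee lam mu i + ee lam mu j + ee lam mu k)
          = (lam:ℤ)*Ff N (31 + (ee lam mu i + ee lam mu j))
            + (lam:ℤ)*Ff N (29 + (ee lam mu i + ee lam mu j))
            + (mu:ℤ)*Ff N (28 + (ee lam mu i + ee lam mu j)) := by
      intro j hj
      have h1 : ∀ k, ee lam mu i + ee lam mu j + ee lam mu k
          = ee lam mu k + (ee lam mu i + ee lam mu j) := fun k => by ring
      simp only [h1]
      exact keyA N lam mu _ (by have := e_ge lam mu i (Finset.mem_range.1 hi); have := e_ge lam mu j (Finset.mem_range.1 hj); linarith)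
    rw [Finset.sum_congr rfl inner]
    have c31 : ∀ j, (31:ℤ) + (ee lam mu i + ee lam mu j)
        = ee lam mu j + (31 + ee lam mu i) := fun j => by ring
    have c29 : ∀ j, (29:ℤ) + (ee lam mu i + ee lam mu j)
        = ee lam mu j + (29 + ee lam mu i) := fun j => by ring
    have c28 : ∀ j, (28:ℤ) + (ee lam mu i + ee lam mu j)
        = ee lam mu j + (28 + ee lam mu i) := fun j => by ring
    simp only [c31, c29, c28]
    rw [Finset.sum_add_distrib, Finset.sum_add_distrib, ← Finset.mul_sum, ← Finset.mul_sum,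
      ← Finset.mul_sum]
    rw [keyA N lam mu (31 + ee lam mu i) (by have := e_ge lam mu i (Finset.mem_range.1 hi); linarith),
      keyA N lam mu (29 + ee lam mu i) (by have := e_ge lam mu i (Finset.mem_range.1 hi); linarith),
      keyA N lam mu (28 + ee lam mu i) (by have := e_ge lam mu i (Finset.mem_range.1 hi); linarith)]
    rw [show (31:ℤ) + (31 + ee lam mu i) = ee lam mu i + 62 from by ring,
      show (29:ℤ) + (31 + ee lam mu i) = ee lam mu i + 60 from by ring,
      show (28:ℤ) + (31 + ee lam mu i) = ee lam mu i + 59 from by ring,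
      show (31:ℤ) + (29 + ee lam mu i) = ee lam mu i + 60 from by ring,
      show (29:ℤ) + (29 + ee lam mu i) = ee lam mu i + 58 from by ring,
      show (28:ℤ) + (29 + ee lam mu i) = ee lam mu i + 57 from by ring,
      show (31:ℤ) + (28 + ee lam mu i) = ee lam mu i + 59 from by ring,
      show (29:ℤ) + (28 + ee lam mu i) = ee lam mu i + 57 from by ring,
      show (28:ℤ) + (28 + ee lam mu i) = ee lam mu i + 56 from by ring]
    ring
  rw [Finset.sum_congr rfl step12]
  rw [Finset.sum_add_distrib, Finset.sum_add_distrib, Finset.sum_add_distrib,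
    Finset.sum_add_distrib, Finset.sum_add_distrib, ← Finset.mul_sum, ← Finset.mul_sum,
    ← Finset.mul_sum, ← Finset.mul_sum, ← Finset.mul_sum, ← Finset.mul_sum]
  rw [keyA N lam mu 62 (by norm_num), keyA N lam mu 60 (by norm_num),
    keyA N lam mu 58 (by norm_num), keyA N lam mu 59 (by norm_num),
    keyA N lam mu 57 (by norm_num), keyA N lam mu 56 (by norm_num)]
  norm_num
  rw [Ff_zero N 93 (by norm_num), Ff_zero N 91 (by norm_num), Ff_zero N 90 (by norm_num),
    Ff_zero N 89 (by norm_num), Ff_zero N 88 (by norm_num), Ff_87, Ff_86, Ff_85, Ff_84]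
  ring
theorem stmt18 (s lam : ℕ) (hs : 1 ≤ s) (hlam : lam ≤ s) :
    ((∑ S ∈ (Finset.range (7 * s)).powersetCard 3,
        intChoose (((7 * s + 5 : ℕ) : ℤ) + 87
          - ∑ k ∈ S, ((dcomp lam (s - lam)).getD k 0 : ℤ)) (7 * s + 5) : ℤ) : ℚ)
      = (lam : ℚ) * (((s : ℚ) - lam) * ((s : ℚ) - lam - 1) / 2)
        + (1 / 6) * ((lam : ℚ) - 2) * ((lam : ℚ) - 1) * (lam : ℚ)
        + ((lam : ℚ) * ((lam : ℚ) - 1) * ((s : ℚ) - lam) / 2)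
          * (intChoose (((7 * s + 5 : ℕ) : ℤ) + 1) (7 * s + 5) : ℚ)
        + (lam : ℚ) * (((s : ℚ) - lam) * ((s : ℚ) - lam - 1) / 2)
          * (intChoose (((7 * s + 5 : ℕ) : ℤ) + 2) (7 * s + 5) : ℚ)
        + (1 / 6) * ((s : ℚ) - lam - 2) * ((s : ℚ) - lam - 1) * ((s : ℚ) - lam)
          * (intChoose (((7 * s + 5 : ℕ) : ℤ) + 3) (7 * s + 5) : ℚ) := by
  set mu := s - lam with hmu
  set N := 7 * s + 5 with hN
  have hn : 7 * s = 7 * lam + 7 * mu := by omega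
  have hL : (∑ S ∈ (Finset.range (7 * s)).powersetCard 3,
      intChoose (((7 * s + 5 : ℕ) : ℤ) + 87
        - ∑ k ∈ S, ((dcomp lam (s - lam)).getD k 0 : ℤ)) (7 * s + 5))
      = ∑ S ∈ (Finset.range (7*lam+7*mu)).powersetCard 3, Ff N (∑ k ∈ S, ee lam mu k) := by
    rw [← hn]; rfl
  rw [hL]
  have h6 := sym3 (ee lam mu) (Ff N) (7*lam+7*mu)
  rw [hT3 N lam mu, hT21 N lam mu, hT111 N lam mu] at h6
  have hmuq : (mu : ℚ) = (s : ℚ) - (lam : ℚ) := by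
    rw [hmu]; push_cast [Nat.cast_sub hlam]; ring
  apply mul_left_cancel₀ (show (6:ℚ) ≠ 0 by norm_num)
  rw [show (6:ℚ) * ((∑ S ∈ (Finset.range (7*lam+7*mu)).powersetCard 3,
      Ff N (∑ k ∈ S, ee lam mu k) : ℤ) : ℚ)
    = ((6 * ∑ S ∈ (Finset.range (7*lam+7*mu)).powersetCard 3,
      Ff N (∑ k ∈ S, ee lam mu k) : ℤ) : ℚ) from by push_cast; ring]
  rw [h6]
  rw [← hmuq]
  push_cast
  ring
end
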